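/- arXiv:1611.08811 — 3 statements merged into one kernel-verified Lean document; each statement's English description precedes it below -/
import Mathlib

section
/- Let U and V be independent random variables on a probability space, each distributed according to the exponential distribution with rate 1. Then for every real θ, the probability P(10·log₁₀(U/V) ≤ θ) equals 1/(1 + 10^(−θ/10)). That is, the random variable Θᵣ = 10·log₁₀(U/V) has cumulative distribution function F_{Θᵣ}(θ) = 1/(1 + 10^(−θ/10)). -/
open MeasureTheory ProbabilityTheory
open Real Set

lemma lint_exp {b : ℝ} (hb : 0 < b) :
    ∫⁻ x in Ioi (0:ℝ), ENNReal.ofReal (rexp (-b * x)) = ENNReal.ofReal (1/b) := by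
  rw [← ofReal_integral_eq_lintegral_ofReal (exp_neg_integrableOn_Ioi 0 hb)
      (ae_of_all _ fun x => (exp_pos _).le)]
  congr 1
  have h := integral_exp_neg_mul_rpow one_pos hb
  simp only [rpow_one, neg_div, div_one, rpow_neg_one] at h
  rw [h]
  norm_num [Real.Gamma_two]

lemma lint_exp_Ici {b : ℝ} (hb : 0 < b) :
    ∫⁻ x in Ici (0:ℝ), ENNReal.ofReal (rexp (-b * x)) = ENNReal.ofReal (1/b) := by
  rw [← lint_exp hb, Measure.restrict_congr_set Ioi_ae_eq_Ici]

lemma expMeasure_Iic_zero : expMeasure 1 (Iic 0) = 0 := by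
  show (volume.withDensity (exponentialPDF 1)) (Iic 0) = 0
  rw [withDensity_apply _ measurableSet_Iic,
    lintegral_exponentialPDF_eq_antiDeriv one_pos 0]
  norm_num

lemma expMeasure_Ici {t : ℝ} (ht : 0 ≤ t) :
    expMeasure 1 (Ici t) = ENNReal.ofReal (rexp (-t)) := by
  show (volume.withDensity (exponentialPDF 1)) (Ici t) = _
  rw [withDensity_apply _ measurableSet_Ici]
  have hfun : ∀ x ∈ Ici t, exponentialPDF 1 x = ENNReal.ofReal (rexp (-1 * x)) :=
    fun x hx => by rw [exponentialPDF_of_nonneg (ht.trans hx)]; norm_num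
  rw [setLIntegral_congr_fun measurableSet_Ici hfun,
    ← ofReal_integral_eq_lintegral_ofReal
      (Iff.mpr integrableOn_Ici_iff_integrableOn_Ioi (exp_neg_integrableOn_Ioi t one_pos))
      (ae_of_all _ fun x => (exp_pos _).le)]
  congr 1
  simp only [neg_one_mul]
  rw [MeasureTheory.integral_Ici_eq_integral_Ioi, integral_exp_neg_Ioi]

lemma prod_exp_le {c : ℝ} (hc : 0 < c) :
    (expMeasure 1).prod (expMeasure 1) {p : ℝ × ℝ | p.1 ≤ c * p.2}
      = ENNReal.ofReal (1 / (1 + c⁻¹)) := by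
  haveI : IsProbabilityMeasure (expMeasure 1) := isProbabilityMeasure_expMeasure one_pos
  have hs : MeasurableSet {p : ℝ × ℝ | p.1 ≤ c * p.2} :=
    measurableSet_le measurable_fst (measurable_const.mul measurable_snd)
  rw [Measure.prod_apply hs]
  -- a.e. u > 0
  have hae : ∀ᵐ u ∂(expMeasure 1), 0 < u := by
    rw [ae_iff]
    simp only [not_lt]; exact expMeasure_Iic_zero
  have hcongr : ∀ᵐ u ∂(expMeasure 1),
      expMeasure 1 (Prod.mk u ⁻¹' {p : ℝ × ℝ | p.1 ≤ c * p.2})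
        = ENNReal.ofReal (rexp (-(c⁻¹ * u))) := by
    filter_upwards [hae] with u hu
    have : (Prod.mk u ⁻¹' {p : ℝ × ℝ | p.1 ≤ c * p.2}) = Ici (u / c) := by
      ext v
      simp [mem_Ici, div_le_iff₀ hc, mul_comm]
    rw [this, expMeasure_Ici (by positivity)]
    congr 1
    rw [div_eq_inv_mul]
  rw [lintegral_congr_ae hcongr]
  show ∫⁻ u, ENNReal.ofReal (rexp (-(c⁻¹ * u))) ∂(volume.withDensity (exponentialPDF 1)) = _
  have hpdf : Measurable (exponentialPDF 1) := (measurable_exponentialPDFReal 1).ennreal_ofReal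
  rw [lintegral_withDensity_eq_lintegral_mul _ hpdf
      (Measurable.ennreal_ofReal (by fun_prop))]
  have hkey : ∀ u : ℝ, exponentialPDF 1 u * ENNReal.ofReal (rexp (-(c⁻¹ * u)))
      = (Ici (0:ℝ)).indicator (fun u => ENNReal.ofReal (rexp (-(1 + c⁻¹) * u))) u := by
    intro u
    by_cases hu : 0 ≤ u
    · rw [exponentialPDF_of_nonneg hu, indicator_of_mem (mem_Ici.mpr hu),
        ← ENNReal.ofReal_mul (by positivity)]
      congr 1
      rw [one_mul, ← Real.exp_add]
      congr 1
      ring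
    · rw [exponentialPDF_of_neg (lt_of_not_ge hu), indicator_of_notMem (by simpa using hu),
        zero_mul]
  simp only [Pi.mul_apply, hkey]
  rw [lintegral_indicator measurableSet_Ici _, lint_exp_Ici (by positivity)]

/-- If `U` and `V` are independent rate-1 exponential random variables, then for every real
`θ` we have `P(10·log₁₀(U/V) ≤ θ)` = `1/(1 + 10^(−θ/10))`. -/
theorem stmt_1 {Ω : Type*} [MeasureSpace Ω] [IsProbabilityMeasure (ℙ : Measure Ω)]
    (U V : Ω → ℝ) (hUm : Measurable U) (hVm : Measurable V)
    (hIndep : IndepFun U V ℙ)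
    (hU : Measure.map U ℙ = expMeasure 1) (hV : Measure.map V ℙ = expMeasure 1)
    (θ : ℝ) :
    ℙ {ω | 10 * Real.logb 10 (U ω / V ω) ≤ θ}
      = ENNReal.ofReal (1 / (1 + (10 : ℝ) ^ (-θ / 10))) := by
  haveI : IsProbabilityMeasure (expMeasure 1) := isProbabilityMeasure_expMeasure one_pos
  set c : ℝ := (10 : ℝ) ^ (θ / 10) with hcdef
  have hc : 0 < c := rpow_pos_of_pos (by norm_num) _
  have hcinv : (10 : ℝ) ^ (-θ / 10) = c⁻¹ := by
    rw [neg_div, Real.rpow_neg (by norm_num)]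
  -- a.e. positivity
  have hUpos : ∀ᵐ ω ∂ℙ, 0 < U ω := by
    rw [ae_iff]
    have : {ω | ¬ 0 < U ω} = U ⁻¹' (Iic 0) := by ext ω; simp [not_lt]
    rw [this, ← Measure.map_apply hUm measurableSet_Iic, hU, expMeasure_Iic_zero]
  have hVpos : ∀ᵐ ω ∂ℙ, 0 < V ω := by
    rw [ae_iff]
    have : {ω | ¬ 0 < V ω} = V ⁻¹' (Iic 0) := by ext ω; simp [not_lt]
    rw [this, ← Measure.map_apply hVm measurableSet_Iic, hV, expMeasure_Iic_zero]
  -- reduce to U ≤ c V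
  have hset : ℙ {ω | 10 * Real.logb 10 (U ω / V ω) ≤ θ} = ℙ {ω | U ω ≤ c * V ω} := by
    refine measure_congr (Filter.eventuallyEq_set.mpr ?_)
    filter_upwards [hUpos, hVpos] with ω hu hv
    have hdiv : 0 < U ω / V ω := div_pos hu hv
    constructor
    · intro h
      have h' : Real.logb 10 (U ω / V ω) ≤ θ / 10 := by linarith
      rw [Real.logb_le_iff_le_rpow (by norm_num) hdiv, ← hcdef] at h'
      exact (div_le_iff₀ hv).mp h'
    · intro h
      have h' : U ω / V ω ≤ c := (div_le_iff₀ hv).mpr h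
      rw [hcdef] at h'
      have := (Real.logb_le_iff_le_rpow (by norm_num : (1:ℝ) < 10) hdiv).mpr h'
      linarith
  rw [hset, hcinv]
  -- joint law
  have hjoint : Measure.map (fun ω => (U ω, V ω)) ℙ = (expMeasure 1).prod (expMeasure 1) := by
    have h := (indepFun_iff_map_prod_eq_prod_map_map hUm.aemeasurable hVm.aemeasurable).mp hIndep
    rw [hU, hV] at h
    exact h
  have hs : MeasurableSet {p : ℝ × ℝ | p.1 ≤ c * p.2} :=
    measurableSet_le measurable_fst (measurable_const.mul measurable_snd)
  have : ℙ {ω | U ω ≤ c * V ω}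
      = (expMeasure 1).prod (expMeasure 1) {p : ℝ × ℝ | p.1 ≤ c * p.2} := by
    rw [← hjoint, Measure.map_apply (hUm.prodMk hVm) hs]
    rfl
  rw [this, prod_exp_le hc]
end

section
/- (Appendix C, intersecting case) Let M and S be points of the Euclidean plane ℝ² at distance d = dist(M,S), and let 0 < ξ ≤ r be radii with ξ ≤ d and r − ξ ≤ d ≤ r + ξ. Set φ₁ = arccos((ξ² + d² − r²)/(2ξd)) and φ₂ = arccos((r² + d² − ξ²)/(2rd)). Then the Lebesgue area of the part of the disk of radius r centered at S lying outside the disk of radius ξ centered at M is volume( closedBall(S, r) \ closedBall(M, ξ) ) = (π − φ₂)·r² − φ₁·ξ² + ξ·d·sin φ₁. -/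
open MeasureTheory Real intervalIntegral

lemma sqrtint (R c : ℝ) (hR : 0 < R) (hc1 : -R ≤ c) (hc2 : c ≤ R) :
    ∫ x in c..R, 2 * Real.sqrt (R^2 - x^2)
      = R^2 * (Real.pi/2 - Real.arcsin (c/R)) - c * Real.sqrt (R^2 - c^2) := by
  have hF : ∀ x ∈ Set.Ioo c R, HasDerivAt (fun x => x * Real.sqrt (R^2 - x^2) + R^2 * Real.arcsin (x/R))
      (2 * Real.sqrt (R^2 - x^2)) x := by
    intro x hx
    have hxR : -R < x := lt_of_le_of_lt hc1 hx.1
    have hxR2 : x < R := hx.2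
    have hpos : 0 < R^2 - x^2 := by nlinarith
    have hs : Real.sqrt (R^2 - x^2) > 0 := Real.sqrt_pos.mpr hpos
    have hsq : Real.sqrt (R^2 - x^2) ^ 2 = R^2 - x^2 := Real.sq_sqrt hpos.le
    have h1 : HasDerivAt (fun x : ℝ => R^2 - x^2) (-(2*x)) x := by
      simpa using ((hasDerivAt_pow 2 x).const_sub (R^2))
    have h2 : HasDerivAt (fun x => Real.sqrt (R^2 - x^2)) (-(2*x) * (1 / (2 * Real.sqrt (R^2 - x^2)))) x := by
      convert h1.sqrt hpos.ne' using 1; ring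
    have h3 : HasDerivAt (fun x => x * Real.sqrt (R^2 - x^2))
        (1 * Real.sqrt (R^2 - x^2) + x * (-(2*x) * (1 / (2 * Real.sqrt (R^2 - x^2))))) x :=
      (hasDerivAt_id x).mul h2
    have h4 : HasDerivAt (fun x : ℝ => x / R) (1/R) x := by
      simpa using (hasDerivAt_id x).div_const R
    have hne1 : x / R ≠ -1 := by
      intro h; rw [div_eq_iff hR.ne'] at h; nlinarith
    have hne2 : x / R ≠ 1 := by
      intro h; rw [div_eq_iff hR.ne'] at h; nlinarith
    have h5 : HasDerivAt (fun x => Real.arcsin (x/R)) (1 / Real.sqrt (1 - (x/R)^2) * (1/R)) x :=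
      by have := (Real.hasDerivAt_arcsin hne1 hne2).comp x h4; exact this
    have h6 := (h3.add (h5.const_mul (R^2)))
    refine h6.congr_deriv (Eq.symm ?_)
    have hsr : Real.sqrt (1 - (x/R)^2) = Real.sqrt (R^2 - x^2) / R := by
      rw [show (1 - (x/R)^2) = (R^2-x^2)/R^2 by field_simp]
      rw [Real.sqrt_div hpos.le, Real.sqrt_sq hR.le]
    rw [hsr]
    have e : (1:ℝ)/(Real.sqrt (R^2-x^2)/R) * (1/R) = 1/Real.sqrt (R^2-x^2) := by
      field_simp
    rw [e]
    field_simp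
    nlinarith [hsq]
  have hcont : ContinuousOn (fun x => x * Real.sqrt (R^2 - x^2) + R^2 * Real.arcsin (x/R)) (Set.Icc c R) := by
    apply Continuous.continuousOn
    exact (continuous_id.mul (Real.continuous_sqrt.comp (by fun_prop))).add
      (continuous_const.mul (Real.continuous_arcsin.comp (by fun_prop)))
  have hint : IntervalIntegrable (fun x => 2 * Real.sqrt (R^2 - x^2)) volume c R := by
    apply Continuous.intervalIntegrable
    fun_prop
  rw [integral_eq_sub_of_hasDerivAt_of_le hc2 hcont hF hint]
  have : Real.sqrt (R^2 - R^2) = 0 := by simp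
  rw [this]
  rw [div_self hR.ne', Real.arcsin_one]
  ring

noncomputable def auxf (ξ r d : ℝ) : ℝ → ℝ :=
  fun x => 2*Real.sqrt (r^2-(x-d)^2) - 2*Real.sqrt (max (ξ^2-x^2) 0)

lemma auxf_apply (ξ r d x : ℝ) :
    auxf ξ r d x = 2*Real.sqrt (r^2-(x-d)^2) - 2*Real.sqrt (max (ξ^2-x^2) 0) := rfl

set_option maxHeartbeats 2000000 in
lemma planar (ξ r d : ℝ) (hξ : 0 < ξ) (hξr : ξ ≤ r) (h1 : ξ ≤ d) (h2 : r - ξ ≤ d)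
    (h3 : d ≤ r + ξ) :
    volume ({p : ℝ × ℝ | (p.1 - d)^2 + p.2^2 ≤ r^2} \ {p : ℝ × ℝ | p.1^2 + p.2^2 ≤ ξ^2})
      = ENNReal.ofReal
          ((Real.pi - Real.arccos ((r^2 + d^2 - ξ^2) / (2*r*d))) * r^2
            - Real.arccos ((ξ^2 + d^2 - r^2) / (2*ξ*d)) * ξ^2
            + ξ * d * Real.sin (Real.arccos ((ξ^2 + d^2 - r^2) / (2*ξ*d)))) := by
  have hd0 : 0 < d := lt_of_lt_of_le hξ h1
  have hr0 : 0 < r := lt_of_lt_of_le hξ hξr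
  set a : ℝ := (ξ^2 + d^2 - r^2) / (2*d) with ha
  have ha2d : 2*d*a = ξ^2 + d^2 - r^2 := by rw [ha]; field_simp
  have haξ : a ≤ ξ := by nlinarith [sq_nonneg (d - ξ - r)]
  have hma : -ξ ≤ a := by nlinarith [sq_nonneg (d + ξ - r)]
  have hdra : d - r ≤ a := by nlinarith [sq_nonneg (d - r - ξ), sq_nonneg (d - r + ξ)]
  have hadr : a ≤ d + r := by linarith
  have hξdr : ξ ≤ d + r := by linarith
  have hIcc : ∀ c : ℝ, 0 ≤ c → {y : ℝ | y^2 ≤ c} = Set.Icc (-Real.sqrt c) (Real.sqrt c) := by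
    intro c hc; ext y
    simp only [Set.mem_setOf_eq, Set.mem_Icc]
    constructor
    · intro h
      constructor <;>
        nlinarith [Real.sq_sqrt hc, Real.sqrt_nonneg c, sq_nonneg (y - Real.sqrt c),
          sq_nonneg (y + Real.sqrt c)]
    · rintro ⟨hy1, hy2⟩; nlinarith [Real.sq_sqrt hc, Real.sqrt_nonneg c]
  have hempty : ∀ c : ℝ, c < 0 → {y : ℝ | y^2 ≤ c} = (∅ : Set ℝ) := by
    intro c hc; ext y; simp only [Set.mem_setOf_eq, Set.mem_empty_iff_false, iff_false, not_le]
    nlinarith [sq_nonneg y]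
  have hfcont : Continuous (auxf ξ r d) := by
    apply Continuous.sub
    · exact continuous_const.mul (Real.continuous_sqrt.comp (by fun_prop))
    · exact continuous_const.mul (Real.continuous_sqrt.comp (by fun_prop))
  -- pointwise slice volume
  have slice : ∀ x : ℝ,
      volume ({y : ℝ | (x - d)^2 + y^2 ≤ r^2} \ {y : ℝ | x^2 + y^2 ≤ ξ^2})
        = ENNReal.ofReal (Set.indicator (Set.Icc a (d+r)) (auxf ξ r d) x) := by
    intro x
    have hset1 : {y : ℝ | (x - d)^2 + y^2 ≤ r^2} = {y : ℝ | y^2 ≤ r^2 - (x-d)^2} := by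
      ext y; simp only [Set.mem_setOf_eq]; constructor <;> intro <;> linarith
    have hset2 : {y : ℝ | x^2 + y^2 ≤ ξ^2} = {y : ℝ | y^2 ≤ ξ^2 - x^2} := by
      ext y; simp only [Set.mem_setOf_eq]; constructor <;> intro <;> linarith
    by_cases hx : x ∈ Set.Icc a (d+r)
    · rw [Set.indicator_of_mem hx]
      obtain ⟨hxa, hxdr⟩ := hx
      have h01 : 0 ≤ r^2 - (x-d)^2 := by nlinarith
      have hAB : ξ^2 - x^2 ≤ r^2 - (x-d)^2 := by
        have := mul_le_mul_of_nonneg_left hxa (by positivity : (0:ℝ) ≤ 2*d)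
        nlinarith [ha2d]
      by_cases hin : 0 ≤ ξ^2 - x^2
      · rw [hset1, hset2, hIcc _ h01, hIcc _ hin]
        have hBA : Real.sqrt (ξ^2-x^2) ≤ Real.sqrt (r^2-(x-d)^2) := Real.sqrt_le_sqrt hAB
        rw [measure_diff (Set.Icc_subset_Icc (neg_le_neg hBA) hBA)
          measurableSet_Icc.nullMeasurableSet measure_Icc_lt_top.ne]
        rw [Real.volume_Icc, Real.volume_Icc, ← ENNReal.ofReal_sub _ (by linarith [Real.sqrt_nonneg (ξ^2-x^2)])]
        congr 1
        rw [auxf_apply, max_eq_left hin]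
        ring
      · push_neg at hin
        rw [hset1, hset2, hIcc _ h01, hempty _ hin, Set.diff_empty, Real.volume_Icc]
        congr 1
        rw [auxf_apply, max_eq_right hin.le, Real.sqrt_zero]
        ring
    · rw [Set.indicator_of_notMem hx]
      rw [ENNReal.ofReal_zero]
      by_cases hout : r^2 - (x-d)^2 < 0
      · rw [hset1, hempty _ hout, Set.empty_diff, measure_empty]
      · push_neg at hout
        have hxlt : x < a := by
          simp only [Set.mem_Icc, not_and_or, not_le] at hx
          rcases hx with h | h
          · exact h
          · exfalso; nlinarith
        have hin0 : r^2 - (x-d)^2 ≤ ξ^2 - x^2 := by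
          have := mul_le_mul_of_nonneg_left hxlt.le (by positivity : (0:ℝ) ≤ 2*d)
          nlinarith [ha2d]
        have hsub : {y : ℝ | (x - d)^2 + y^2 ≤ r^2} ⊆ {y : ℝ | x^2 + y^2 ≤ ξ^2} := by
          intro y hy
          simp only [Set.mem_setOf_eq] at *
          linarith
        rw [Set.diff_eq_empty.mpr hsub, measure_empty]
  -- measurability
  have hTm : MeasurableSet
      ({p : ℝ × ℝ | (p.1 - d)^2 + p.2^2 ≤ r^2} \ {p : ℝ × ℝ | p.1^2 + p.2^2 ≤ ξ^2}) := by
    apply MeasurableSet.diff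
    · exact measurableSet_le (by fun_prop) measurable_const
    · exact measurableSet_le (by fun_prop) measurable_const
  have hGnn : 0 ≤ᵐ[volume] Set.indicator (Set.Icc a (d+r)) (auxf ξ r d) := by
    refine Filter.Eventually.of_forall ?_
    intro x
    refine Set.indicator_nonneg ?_ x
    intro x hx
    obtain ⟨hxa, hxdr⟩ := hx
    have h01 : 0 ≤ r^2 - (x-d)^2 := by nlinarith
    have hAB : ξ^2 - x^2 ≤ r^2 - (x-d)^2 := by
      have := mul_le_mul_of_nonneg_left hxa (by positivity : (0:ℝ) ≤ 2*d)
      nlinarith [ha2d]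
    have : Real.sqrt (max (ξ^2-x^2) 0) ≤ Real.sqrt (r^2-(x-d)^2) :=
      Real.sqrt_le_sqrt (max_le hAB h01)
    rw [auxf_apply, sub_nonneg]
    linarith
  have hGint : Integrable (Set.indicator (Set.Icc a (d+r)) (auxf ξ r d)) := by
    rw [integrable_indicator_iff measurableSet_Icc]
    exact hfcont.integrableOn_Icc
  -- Fubini
  have hvol : volume ({p : ℝ × ℝ | (p.1 - d)^2 + p.2^2 ≤ r^2} \ {p : ℝ × ℝ | p.1^2 + p.2^2 ≤ ξ^2})
      = ∫⁻ x, ENNReal.ofReal (Set.indicator (Set.Icc a (d+r)) (auxf ξ r d) x) := by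
    rw [Measure.volume_eq_prod, Measure.prod_apply hTm]
    refine lintegral_congr fun x => ?_
    rw [← slice x]
    rfl
  rw [hvol, ← ofReal_integral_eq_lintegral_ofReal hGint hGnn]
  congr 1
  -- compute the integral
  have hGval : ∫ x, Set.indicator (Set.Icc a (d+r)) (auxf ξ r d) x
      = ∫ x in a..(d+r), auxf ξ r d x := by
    rw [MeasureTheory.integral_indicator measurableSet_Icc, MeasureTheory.integral_Icc_eq_integral_Ioc,
      ← intervalIntegral.integral_of_le hadr]
  have hi1 : IntervalIntegrable (fun x => 2*Real.sqrt (r^2-(x-d)^2)) volume a (d+r) :=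
    Continuous.intervalIntegrable (continuous_const.mul (Real.continuous_sqrt.comp (by fun_prop))) _ _
  have hi2c : Continuous (fun x : ℝ => 2*Real.sqrt (max (ξ^2-x^2) 0)) :=
    continuous_const.mul (Real.continuous_sqrt.comp (by fun_prop))
  have hsplit : ∫ x in a..(d+r), auxf ξ r d x
      = (∫ x in a..(d+r), 2*Real.sqrt (r^2-(x-d)^2))
        - ∫ x in a..(d+r), 2*Real.sqrt (max (ξ^2-x^2) 0) :=
    intervalIntegral.integral_sub hi1 (hi2c.intervalIntegrable _ _)
  have hI1 : (∫ x in a..(d+r), 2*Real.sqrt (r^2-(x-d)^2))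
      = r^2 * (Real.pi/2 - Real.arcsin ((a-d)/r)) - (a-d) * Real.sqrt (r^2 - (a-d)^2) := by
    have := intervalIntegral.integral_comp_sub_right (a := a) (b := d+r)
      (fun u => 2*Real.sqrt (r^2-u^2)) d
    rw [this, show d + r - d = r by ring]
    exact sqrtint r (a-d) hr0 (by linarith) (by linarith)
  have hI2 : (∫ x in a..(d+r), 2*Real.sqrt (max (ξ^2-x^2) 0))
      = ξ^2 * (Real.pi/2 - Real.arcsin (a/ξ)) - a * Real.sqrt (ξ^2 - a^2) := by
    rw [← intervalIntegral.integral_add_adjacent_intervals (a := a) (b := ξ) (c := d+r)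
      (hi2c.intervalIntegrable _ _) (hi2c.intervalIntegrable _ _)]
    have e2 : (∫ x in ξ..(d+r), 2*Real.sqrt (max (ξ^2-x^2) 0)) = 0 := by
      rw [intervalIntegral.integral_congr (g := fun _ => (0:ℝ))]
      · simp
      · intro x hx
        rw [Set.uIcc_of_le hξdr, Set.mem_Icc] at hx
        have : ξ^2 - x^2 ≤ 0 := by nlinarith [hx.1, hx.2]
        simp [max_eq_right this]
    have e1 : (∫ x in a..ξ, 2*Real.sqrt (max (ξ^2-x^2) 0))
        = ∫ x in a..ξ, 2*Real.sqrt (ξ^2-x^2) := by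
      apply intervalIntegral.integral_congr
      intro x hx
      rw [Set.uIcc_of_le haξ, Set.mem_Icc] at hx
      have : 0 ≤ ξ^2 - x^2 := by nlinarith [hx.1, hx.2]
      simp [max_eq_left this]
    rw [e2, add_zero, e1]
    exact sqrtint ξ a hξ hma haξ
  -- final arithmetic
  rw [hGval, hsplit, hI1, hI2]
  have e1 : r^2 - (a-d)^2 = ξ^2 - a^2 := by linear_combination ha2d
  have e2 : Real.arcsin ((a-d)/r) = Real.arccos ((r^2 + d^2 - ξ^2) / (2*r*d)) - Real.pi/2 := by
    have h : (a-d)/r = -((r^2 + d^2 - ξ^2) / (2*r*d)) := by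
      rw [ha]; field_simp [hd0.ne', hr0.ne']; ring
    rw [h, Real.arcsin_neg, Real.arcsin_eq_pi_div_two_sub_arccos]
    ring
  have e3 : Real.arcsin (a/ξ) = Real.pi/2 - Real.arccos ((ξ^2 + d^2 - r^2) / (2*ξ*d)) := by
    have h : a/ξ = (ξ^2 + d^2 - r^2) / (2*ξ*d) := by
      rw [ha, div_div, show 2*d*ξ = 2*ξ*d by ring]
    rw [h, Real.arcsin_eq_pi_div_two_sub_arccos]
  have e4 : ξ * Real.sin (Real.arccos ((ξ^2 + d^2 - r^2) / (2*ξ*d))) = Real.sqrt (ξ^2 - a^2) := by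
    rw [Real.sin_arccos]
    have h : ξ^2 - a^2 = ξ^2 * (1 - ((ξ^2 + d^2 - r^2) / (2*ξ*d))^2) := by
      rw [ha]; field_simp [hd0.ne', hξ.ne']
    rw [h, Real.sqrt_mul (by positivity), Real.sqrt_sq hξ.le]
  rw [e1, e2, e3]
  nlinarith [e4]

set_option maxHeartbeats 2000000 in
/-- Appendix C, intersecting case: with `d = dist(M,S)`, radii `0 < ξ ≤ r`, `ξ ≤ d` and
`r − ξ ≤ d ≤ r + ξ`, the area of the disk of radius `r` around `S` outside the disk of radius
`ξ` around `M` is `(π − φ₂)r² − φ₁ξ² + ξ·d·sin φ₁` where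
`φ₁ = arccos((ξ² + d² − r²)/(2ξd))` and `φ₂ = arccos((r² + d² − ξ²)/(2rd))`. -/
theorem stmt_15 (M S : EuclideanSpace ℝ (Fin 2)) (ξ r : ℝ)
    (hξ : 0 < ξ) (hξr : ξ ≤ r) (h1 : ξ ≤ dist M S)
    (h2 : r - ξ ≤ dist M S) (h3 : dist M S ≤ r + ξ) :
    volume (Metric.closedBall S r \ Metric.closedBall M ξ)
      = ENNReal.ofReal
          ((Real.pi - Real.arccos ((r ^ 2 + dist M S ^ 2 - ξ ^ 2) / (2 * r * dist M S))) * r ^ 2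
            - Real.arccos ((ξ ^ 2 + dist M S ^ 2 - r ^ 2) / (2 * ξ * dist M S)) * ξ ^ 2
            + ξ * dist M S
              * Real.sin (Real.arccos ((ξ ^ 2 + dist M S ^ 2 - r ^ 2) / (2 * ξ * dist M S)))) := by
  have hr0 : 0 < r := lt_of_lt_of_le hξ hξr
  set d : ℝ := dist M S with hd
  have hd0 : 0 < d := lt_of_lt_of_le hξ h1
  have hSM : ‖S - M‖ = d := by rw [hd, dist_comm M S, dist_eq_norm]
  have hu : ‖d⁻¹ • (S - M)‖ = 1 := by
    rw [norm_smul, hSM, norm_inv, Real.norm_of_nonneg hd0.le]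
    field_simp
  have hcard : Module.finrank ℝ (EuclideanSpace ℝ (Fin 2)) = Fintype.card (Fin 2) := by
    simp [finrank_euclideanSpace]
  have hON : Orthonormal ℝ
      (Set.restrict {(0 : Fin 2)} (fun _ : Fin 2 => d⁻¹ • (S - M))) := by
    constructor
    · intro i; exact hu
    · intro i j hij
      exact absurd (Subtype.ext
        ((Set.eq_of_mem_singleton i.2).trans (Set.eq_of_mem_singleton j.2).symm)) hij
  obtain ⟨b, hb⟩ := hON.exists_orthonormalBasis_extension_of_card_eq hcard
  have hb0 : b 0 = d⁻¹ • (S - M) := hb 0 rfl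
  have hrepr : b.repr (S - M) = d • EuclideanSpace.single 0 (1:ℝ) := by
    have h : S - M = d • (d⁻¹ • (S - M)) := (smul_inv_smul₀ hd0.ne' _).symm
    rw [h, _root_.map_smul, ← hb0, b.repr_self]
  set Φ : ℝ × ℝ → EuclideanSpace ℝ (Fin 2) := fun p =>
    M + b.repr.symm
      ((MeasurableEquiv.toLp 2 (Fin 2 → ℝ)) (MeasurableEquiv.finTwoArrow.symm p))
    with hΦ
  have hMP : MeasurePreserving Φ := by
    have m1 : MeasurePreserving (MeasurableEquiv.finTwoArrow.symm : ℝ × ℝ → (Fin 2 → ℝ)) :=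
      (volume_preserving_finTwoArrow ℝ).symm
    have m2 : MeasurePreserving
        ((MeasurableEquiv.toLp 2 (Fin 2 → ℝ)) :
          (Fin 2 → ℝ) → EuclideanSpace ℝ (Fin 2)) :=
      (EuclideanSpace.volume_preserving_symm_measurableEquiv_toLp (Fin 2)).symm
    have m3 : MeasurePreserving
        (b.repr.symm : EuclideanSpace ℝ (Fin 2) → EuclideanSpace ℝ (Fin 2)) :=
      b.repr.symm.measurePreserving
    have m4 : MeasurePreserving (fun x : EuclideanSpace ℝ (Fin 2) => M + x) :=
      measurePreserving_add_left volume M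
    exact m4.comp (m3.comp (m2.comp m1))
  have hnormE : ∀ v : EuclideanSpace ℝ (Fin 2), ‖v‖ = Real.sqrt ((v 0)^2 + (v 1)^2) := by
    intro v
    rw [EuclideanSpace.norm_eq]
    simp [Fin.sum_univ_two, sq_abs]
  have hw : ∀ (p : ℝ × ℝ) (i : Fin 2),
      ((MeasurableEquiv.toLp 2 (Fin 2 → ℝ)) (MeasurableEquiv.finTwoArrow.symm p)) i
        = ![p.1, p.2] i := fun p i => rfl
  have hdistM : ∀ p : ℝ × ℝ, dist (Φ p) M = Real.sqrt (p.1^2 + p.2^2) := by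
    intro p
    rw [hΦ, dist_eq_norm]
    have : M + b.repr.symm
        ((MeasurableEquiv.toLp 2 (Fin 2 → ℝ)) (MeasurableEquiv.finTwoArrow.symm p)) - M
        = b.repr.symm
          ((MeasurableEquiv.toLp 2 (Fin 2 → ℝ)) (MeasurableEquiv.finTwoArrow.symm p)) := by
      abel
    rw [this, b.repr.symm.norm_map, hnormE]
    rw [hw p 0, hw p 1]
    simp
  have hdistS : ∀ p : ℝ × ℝ, dist (Φ p) S = Real.sqrt ((p.1 - d)^2 + p.2^2) := by
    intro p
    rw [hΦ, dist_eq_norm]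
    have h : M + b.repr.symm
        ((MeasurableEquiv.toLp 2 (Fin 2 → ℝ)) (MeasurableEquiv.finTwoArrow.symm p)) - S
        = b.repr.symm
          ((MeasurableEquiv.toLp 2 (Fin 2 → ℝ)) (MeasurableEquiv.finTwoArrow.symm p))
          - (S - M) := by
      abel
    rw [h, ← b.repr.norm_map, map_sub, b.repr.apply_symm_apply, hrepr, hnormE]
    congr 2
    · have := hw p 0
      simp only [PiLp.sub_apply, PiLp.smul_apply, smul_eq_mul] at *
      rw [this]
      simp [EuclideanSpace.single_apply]
    · have := hw p 1
      simp only [PiLp.sub_apply, PiLp.smul_apply, smul_eq_mul] at *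
      rw [this]
      simp [EuclideanSpace.single_apply]
  have hmeas : MeasurableSet (Metric.closedBall S r \ Metric.closedBall M ξ) :=
    measurableSet_closedBall.diff measurableSet_closedBall
  have hpre : Φ ⁻¹' (Metric.closedBall S r \ Metric.closedBall M ξ)
      = {p : ℝ × ℝ | (p.1 - d)^2 + p.2^2 ≤ r^2} \ {p : ℝ × ℝ | p.1^2 + p.2^2 ≤ ξ^2} := by
    ext p
    simp only [Set.mem_preimage, Set.mem_diff, Metric.mem_closedBall, Set.mem_setOf_eq]
    rw [hdistS p, hdistM p, Real.sqrt_le_left hr0.le, Real.sqrt_le_left hξ.le]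
  rw [← hMP.measure_preimage hmeas.nullMeasurableSet, hpre]
  exact planar ξ r d hξ hξr h1 h2 h3
end

section
/- (Appendix F) Let M asnd S be points of the Euclidean plane ℝ² at distance d = dist(M,S) > 0, and let 0 < r ≤ R be radii with R − r ≤ d ≤ R + r. Set φ₃ = arccos((R² + d² − r²)/(2Rd)) and φ₄ = arccos((r² + d² − R²)/(2rd)). Then the Lebesgue area of the intersection of the disk of radius R centered at M with the disk of radius r centered at S is volume( closedBall(M, R) ∩ closedBall(S, r) ) = φ₃·R² + φ₄·r² − R·d·sin φ₃. -/
open Real MeasureTheory Set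
open MeasureTheory


lemma ftc_sqrt (Rv a : ℝ) (hR : 0 < Rv) (ha : -Rv ≤ a) (haR : a ≤ Rv) :
    ∫ x in a..Rv, Real.sqrt (Rv^2 - x^2)
      = (Rv^2 * Real.arccos (a/Rv) - a * Real.sqrt (Rv^2 - a^2)) / 2 := by
  set F : ℝ → ℝ := fun x => (x * Real.sqrt (Rv^2 - x^2) + Rv^2 * Real.arcsin (x/Rv)) / 2 with hF
  have hcont : ContinuousOn F (Icc a Rv) := by
    apply Continuous.continuousOn
    continuity
  have hderiv : ∀ x ∈ Ioo a Rv, HasDerivAt F (Real.sqrt (Rv^2 - x^2)) x := by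
    intro x hx
    have hx1 : -Rv < x := lt_of_le_of_lt ha hx.1
    have hx2 : x < Rv := hx.2
    have hpos : 0 < Rv^2 - x^2 := by nlinarith
    have hs : 0 < Real.sqrt (Rv^2 - x^2) := Real.sqrt_pos.2 hpos
    have h1 : HasDerivAt (fun x : ℝ => Rv^2 - x^2) (-(2*x)) x := by
      simpa using ((hasDerivAt_pow 2 x).const_sub (Rv^2))
    have h2 : HasDerivAt (fun x : ℝ => Real.sqrt (Rv^2 - x^2)) (-(2*x) / (2 * Real.sqrt (Rv^2 - x^2))) x := by
      exact h1.sqrt hpos.ne'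
    have h3 : HasDerivAt (fun x : ℝ => x * Real.sqrt (Rv^2 - x^2))
        (Real.sqrt (Rv^2 - x^2) + x * (-(2*x) / (2 * Real.sqrt (Rv^2 - x^2)))) x := by
      exact ((hasDerivAt_id' x).mul h2).congr_deriv (by ring)
    have harg1 : x / Rv ≠ -1 := by
      intro h; rw [div_eq_iff hR.ne'] at h; nlinarith
    have harg2 : x / Rv ≠ 1 := by
      intro h; rw [div_eq_iff hR.ne'] at h; nlinarith
    have h4 : HasDerivAt (fun x : ℝ => Real.arcsin (x / Rv))
        (1 / Real.sqrt (1 - (x/Rv)^2) * (1/Rv)) x := by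
      exact (Real.hasDerivAt_arcsin harg1 harg2).comp x ((hasDerivAt_id x).div_const Rv)
    have hnn : (0:ℝ) ≤ 1 - (x/Rv)^2 := by
      have : 1 - (x/Rv)^2 = (Rv^2 - x^2) / Rv^2 := by field_simp
      rw [this]; positivity
    have key : Real.sqrt (1 - (x/Rv)^2) = Real.sqrt (Rv^2 - x^2) / Rv := by
      have harg : 1 - (x/Rv)^2 = (Rv^2 - x^2) / Rv^2 := by field_simp
      rw [harg, Real.sqrt_div hpos.le, Real.sqrt_sq hR.le]
    have := ((h3.add (h4.const_mul (Rv^2))).div_const 2)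
    refine this.congr_deriv ?_; symm
    rw [key]
    have hsq := Real.sq_sqrt hpos.le
    rw [one_div_div]
    field_simp
    linear_combination hsq
  have hInt : IntervalIntegrable (fun x => Real.sqrt (Rv^2 - x^2)) volume a Rv := by
    apply Continuous.intervalIntegrable; fun_prop
  have := intervalIntegral.integral_eq_sub_of_hasDeriv_right_of_le haR hcont (fun x hx => (hderiv x hx).hasDerivWithinAt) hInt
  rw [this]
  have : (Rv : ℝ) / Rv = 1 := div_self hR.ne'
  simp only [hF, this, Real.arcsin_one]
  have h0 : Real.sqrt (Rv^2 - Rv^2) = 0 := by simp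
  rw [h0, Real.arccos]
  ring

set_option maxHeartbeats 1600000 in
lemma lens_area (d r R : ℝ) (hr : 0 < r) (hrR : r ≤ R) (hd : 0 < d)
    (h1 : R - r ≤ d) (h2 : d ≤ R + r) :
    volume {p : ℝ × ℝ | p.1^2 + p.2^2 ≤ R^2 ∧ (p.1 - d)^2 + p.2^2 ≤ r^2}
      = ENNReal.ofReal (Real.arccos ((R^2 + d^2 - r^2)/(2*R*d)) * R^2
          + Real.arccos ((r^2 + d^2 - R^2)/(2*r*d)) * r^2
          - R * d * Real.sin (Real.arccos ((R^2 + d^2 - r^2)/(2*R*d)))) := by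
  have hR : 0 < R := lt_of_lt_of_le hr hrR
  set a : ℝ := (d^2 + R^2 - r^2) / (2*d) with ha_def
  have hdra : d - r ≤ a := by
    rw [ha_def, le_div_iff₀ (by positivity)]
    nlinarith
  have haR : a ≤ R := by
    rw [ha_def, div_le_iff₀ (by positivity)]
    nlinarith
  have hnR : -R ≤ a := le_trans (by nlinarith) hdra
  have hda1 : -r ≤ d - a := by
    rw [ha_def]
    rw [show d - (d^2 + R^2 - r^2)/(2*d) = (d^2 + r^2 - R^2)/(2*d) by field_simp; ring]
    rw [le_div_iff₀ (by positivity)]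
    nlinarith
  have hda2 : d - a ≤ r := by nlinarith
  -- the key height identity
  have hh : R^2 - a^2 = r^2 - (d-a)^2 := by
    rw [ha_def]; field_simp; ring
  set m : ℝ → ℝ := fun x => min (R^2 - x^2) (r^2 - (x - d)^2) with hm
  set G : ℝ → ℝ := fun x => 2 * Real.sqrt (m x) with hG
  have hGcont : Continuous G := by
    apply Continuous.mul continuous_const
    apply Real.continuous_sqrt.comp
    exact Continuous.min (by continuity) (by continuity)
  have hGsupp : ∀ x, x ∉ Icc (d - r) R → G x = 0 := by
    intro x hx
    rw [mem_Icc, not_and_or] at hx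
    have : m x ≤ 0 := by
      rcases hx with hx | hx
      · push_neg at hx
        exact le_trans (min_le_right _ _) (by nlinarith)
      · push_neg at hx
        exact le_trans (min_le_left _ _) (by nlinarith)
    simp [hG, Real.sqrt_eq_zero'.mpr this]
  -- measurability
  have hAmeas : MeasurableSet {p : ℝ × ℝ | p.1^2 + p.2^2 ≤ R^2 ∧ (p.1 - d)^2 + p.2^2 ≤ r^2} := by
    simp only [setOf_and]
    have c1 : Continuous fun p : ℝ × ℝ => p.1^2 + p.2^2 :=
      ((continuous_fst.pow 2).add (continuous_snd.pow 2))
    have c2 : Continuous fun p : ℝ × ℝ => (p.1 - d)^2 + p.2^2 :=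
      (((continuous_fst.sub continuous_const).pow 2).add (continuous_snd.pow 2))
    exact ((isClosed_le c1 continuous_const).measurableSet).inter
      ((isClosed_le c2 continuous_const).measurableSet)
  -- Step A: slices
  have hslice : ∀ x : ℝ, volume {y : ℝ | x^2 + y^2 ≤ R^2 ∧ (x - d)^2 + y^2 ≤ r^2}
      = ENNReal.ofReal (G x) := by
    intro x
    have hset : {y : ℝ | x^2 + y^2 ≤ R^2 ∧ (x - d)^2 + y^2 ≤ r^2} = {y : ℝ | y^2 ≤ m x} := by
      ext y; simp only [mem_setOf_eq, le_min_iff, hm]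
      constructor
      · rintro ⟨hy1, hy2⟩; exact ⟨by linarith, by linarith⟩
      · rintro ⟨hy1, hy2⟩; exact ⟨by linarith, by linarith⟩
    rw [hset]
    by_cases hmx : 0 ≤ m x
    · have hset2 : {y : ℝ | y^2 ≤ m x} = Icc (-Real.sqrt (m x)) (Real.sqrt (m x)) := by
        ext y
        simp only [mem_setOf_eq, mem_Icc, ← abs_le]
        constructor
        · intro h; rw [← Real.sqrt_sq_eq_abs]; exact Real.sqrt_le_sqrt h
        · intro h
          have := pow_le_pow_left₀ (abs_nonneg y) h 2
          rwa [sq_abs, Real.sq_sqrt hmx] at this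
      rw [hset2, Real.volume_Icc, hG]
      congr 1
      ring
    · push_neg at hmx
      have hset2 : {y : ℝ | y^2 ≤ m x} = (∅ : Set ℝ) :=
        eq_empty_iff_forall_notMem.mpr (fun y hy => by
          simp only [mem_setOf_eq] at hy; nlinarith [sq_nonneg y])
      rw [hset2, measure_empty, hG]
      simp [Real.sqrt_eq_zero'.mpr hmx.le]
  -- Step A': volume = lintegral of slices
  have hA : volume {p : ℝ × ℝ | p.1^2 + p.2^2 ≤ R^2 ∧ (p.1 - d)^2 + p.2^2 ≤ r^2}
      = ∫⁻ x, ENNReal.ofReal (G x) := by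
    rw [MeasureTheory.Measure.volume_eq_prod, MeasureTheory.Measure.prod_apply hAmeas]
    exact lintegral_congr fun x => hslice x
  have h2da : 2*d*a = d^2 + R^2 - r^2 := by rw [ha_def]; field_simp
  clear_value a
  clear_value G
  clear_value m
  have hGcs : HasCompactSupport G := HasCompactSupport.intro isCompact_Icc hGsupp
  have hGint : Integrable G := hGcont.integrable_of_hasCompactSupport hGcs
  have hGnn : ∀ x, 0 ≤ G x := by
    intro x; rw [hG]; positivity
  have hB : ∫⁻ x, ENNReal.ofReal (G x) = ENNReal.ofReal (∫ x, G x) :=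
    (MeasureTheory.ofReal_integral_eq_lintegral_ofReal hGint
      (Filter.Eventually.of_forall hGnn)).symm
  have hC : ∫ x, G x = ∫ x in (d-r)..R, G x := by
    rw [intervalIntegral.integral_of_le (by linarith : d - r ≤ R),
      ← MeasureTheory.integral_Icc_eq_integral_Ioc,
      MeasureTheory.setIntegral_eq_integral_of_forall_compl_eq_zero hGsupp]
  have hsplit : ∫ x in (d-r)..R, G x = (∫ x in (d-r)..a, G x) + ∫ x in a..R, G x :=
    (intervalIntegral.integral_add_adjacent_intervals
      (hGcont.intervalIntegrable _ _) (hGcont.intervalIntegrable _ _)).symm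
  have hI2 : ∫ x in a..R, G x = R^2 * Real.arccos (a/R) - a * Real.sqrt (R^2 - a^2) := by
    have hcongr : ∫ x in a..R, G x = ∫ x in a..R, 2 * Real.sqrt (R^2 - x^2) := by
      apply intervalIntegral.integral_congr
      intro x hx
      rw [uIcc_of_le haR] at hx
      have hle : R^2 - x^2 ≤ r^2 - (x - d)^2 := by
        clear hA hB hslice hGint hGcs hGsupp hGcont hAmeas hC hsplit
        nlinarith [mul_nonneg hd.le (sub_nonneg.2 hx.1), h2da]
      have hmin : m x = R^2 - x^2 := by
        rw [hm]; exact inf_eq_left.mpr hle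
      simp [hG, hmin]
    rw [hcongr, intervalIntegral.integral_const_mul, ftc_sqrt R a hR hnR haR]
    ring
  have hI1 : ∫ x in (d-r)..a, G x
      = r^2 * Real.arccos ((d-a)/r) - (d-a) * Real.sqrt (r^2 - (d-a)^2) := by
    have hcongr : ∫ x in (d-r)..a, G x
        = ∫ x in (d-r)..a, (fun u => 2 * Real.sqrt (r^2 - u^2)) (d - x) := by
      apply intervalIntegral.integral_congr
      intro x hx
      rw [uIcc_of_le hdra] at hx
      have hle : r^2 - (x - d)^2 ≤ R^2 - x^2 := by
        clear hA hB hslice hGint hGcs hGsupp hGcont hAmeas hC hsplit hI2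
        nlinarith [mul_nonneg hd.le (sub_nonneg.2 hx.2), h2da]
      have hmin : m x = r^2 - (x - d)^2 := by
        rw [hm]; exact inf_eq_right.mpr hle
      simp only [hG, hmin]
      rw [show (x - d)^2 = (d - x)^2 by ring]
    rw [hcongr, intervalIntegral.integral_comp_sub_left (fun u => 2 * Real.sqrt (r^2 - u^2)) d,
      show d - (d - r) = r by ring,
      intervalIntegral.integral_const_mul, ftc_sqrt r (d-a) hr hda1 hda2]
    ring
  rw [hA, hB, hC, hsplit, hI1, hI2]
  congr 1
  have hcos1 : (R^2 + d^2 - r^2)/(2*R*d) = a / R := by rw [ha_def]; field_simp; ring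
  have hcos2 : (r^2 + d^2 - R^2)/(2*r*d) = (d - a) / r := by rw [ha_def]; field_simp; ring
  rw [hcos1, hcos2, Real.sin_arccos]
  have hhh : Real.sqrt (r^2 - (d-a)^2) = Real.sqrt (R^2 - a^2) := by rw [hh]
  have hsin : Real.sqrt (R^2 - a^2) = R * Real.sqrt (1 - (a/R)^2) := by
    rw [show R^2 - a^2 = R^2 * (1 - (a/R)^2) by field_simp,
      Real.sqrt_mul (by positivity), Real.sqrt_sq hR.le]
  have hkey : R * d * Real.sqrt (1 - (a/R)^2) = d * Real.sqrt (R^2 - a^2) := by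
    rw [hsin]; ring
  rw [hhh, hkey]
  ring

lemma norm_le_iff_sq (y : EuclideanSpace ℝ (Fin 2)) (ρ : ℝ) (hρ : 0 ≤ ρ) :
    ‖y‖ ≤ ρ ↔ (y 0)^2 + (y 1)^2 ≤ ρ^2 := by
  rw [EuclideanSpace.norm_eq]
  simp only [Fin.sum_univ_two, Real.norm_eq_abs, sq_abs]
  rw [Real.sqrt_le_left hρ]

set_option maxHeartbeats 1000000 in
/-- Appendix F: with `d = dist(M,S) > 0`, radii `0 < r ≤ R` and `R − r ≤ d ≤ R + r`, the area
of the intersection of the disk of radius `R` around `M` with the disk of radius `r` around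
`S` is `φ₃R² + φ₄r² − R·d·sin φ₃` where `φ₃ = arccos((R² + d² − r²)/(2Rd))` and
`φ₄ = arccos((r² + d² − R²)/(2rd))`. -/
theorem stmt_17 (M S : EuclideanSpace ℝ (Fin 2)) (r R : ℝ)
    (hr : 0 < r) (hrR : r ≤ R) (hd : 0 < dist M S)
    (h1 : R - r ≤ dist M S) (h2 : dist M S ≤ R + r) :
    volume (Metric.closedBall M R ∩ Metric.closedBall S r)
      = ENNReal.ofReal
          (Real.arccos ((R ^ 2 + dist M S ^ 2 - r ^ 2) / (2 * R * dist M S)) * R ^ 2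
            + Real.arccos ((r ^ 2 + dist M S ^ 2 - R ^ 2) / (2 * r * dist M S)) * r ^ 2
            - R * dist M S
              * Real.sin (Real.arccos ((R ^ 2 + dist M S ^ 2 - r ^ 2) / (2 * R * dist M S)))) := by
  have hR : 0 < R := lt_of_lt_of_le hr hrR
  set d : ℝ := dist M S with hd_def
  -- unit vector in direction S - M
  set v : EuclideanSpace ℝ (Fin 2) := d⁻¹ • (S - M) with hv_def
  have hSM : ‖S - M‖ = d := by
    rw [hd_def, dist_comm, dist_eq_norm]
  have hvnorm : ‖v‖ = 1 := by
    rw [hv_def, norm_smul, hSM, norm_inv, Real.norm_eq_abs, abs_of_pos hd, inv_mul_cancel₀ hd.ne']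
  have hdv : d • v = S - M := by
    rw [hv_def, smul_smul, mul_inv_cancel₀ hd.ne', one_smul]
  -- orthonormal basis with b 0 = v
  have hortho : Orthonormal ℝ (Set.restrict {0} (fun _ : Fin 2 => v)) := by
    constructor
    · intro i; exact hvnorm
    · intro i j hij
      exact absurd (Subtype.ext (by
        have hi := i.2; have hj := j.2
        simp only [Set.mem_singleton_iff] at hi hj
        rw [hi, hj])) hij
  obtain ⟨b, hb0⟩ := hortho.exists_orthonormalBasis_extension_of_card_eq
    (by simp [finrank_euclideanSpace_fin])
  have hb0' : b 0 = v := hb0 0 rfl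
  -- measure preserving chain
  have mp1 : MeasurePreserving (fun x : EuclideanSpace ℝ (Fin 2) => x - M) volume volume := by
    have : (fun x : EuclideanSpace ℝ (Fin 2) => x - M) = (· + -M) := by
      funext x; exact sub_eq_add_neg x M
    rw [this]
    exact ⟨measurable_add_const (-M), map_add_right_eq_self volume (-M)⟩
  have mp2 : MeasurePreserving (⇑b.repr) volume volume := b.measurePreserving_repr
  have mp3 := EuclideanSpace.volume_preserving_symm_measurableEquiv_toLp (Fin 2)
  have mp4 := MeasureTheory.volume_preserving_piFinTwo (fun _ : Fin 2 => ℝ)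
  set T : EuclideanSpace ℝ (Fin 2) → ℝ × ℝ :=
    fun x => ((b.repr (x - M)) 0, (b.repr (x - M)) 1) with hT
  have mpT : MeasurePreserving T volume volume := by
    have : T = (MeasurableEquiv.piFinTwo (fun _ : Fin 2 => ℝ))
        ∘ (MeasurableEquiv.toLp 2 (Fin 2 → ℝ)).symm
        ∘ (⇑b.repr) ∘ (fun x => x - M) := rfl
    rw [this]
    exact mp4.comp (mp3.comp (mp2.comp mp1))
  -- coordinates of b.repr (S - M)
  have hw : b.repr (S - M) = (d : ℝ) • EuclideanSpace.single 0 (1:ℝ) := by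
    rw [← hdv, _root_.map_smul, ← hb0', b.repr_self]
  -- set equality
  have hset : Metric.closedBall M R ∩ Metric.closedBall S r
      = T ⁻¹' {p : ℝ × ℝ | p.1^2 + p.2^2 ≤ R^2 ∧ (p.1 - d)^2 + p.2^2 ≤ r^2} := by
    ext x
    simp only [Set.mem_inter_iff, Metric.mem_closedBall, Set.mem_preimage, Set.mem_setOf_eq, hT]
    have e1 : dist x M = ‖b.repr (x - M)‖ := by
      rw [dist_eq_norm, b.repr.norm_map]
    have e2 : dist x S = ‖b.repr (x - M) - b.repr (S - M)‖ := by
      rw [← map_sub, dist_eq_norm, b.repr.norm_map]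
      congr 1; abel
    rw [e1, e2, norm_le_iff_sq _ R hR.le, norm_le_iff_sq _ r hr.le, hw]
    simp [EuclideanSpace.single_apply]
  have hAmeas : MeasurableSet {p : ℝ × ℝ | p.1^2 + p.2^2 ≤ R^2 ∧ (p.1 - d)^2 + p.2^2 ≤ r^2} := by
    simp only [Set.setOf_and]
    have c1 : Continuous fun p : ℝ × ℝ => p.1^2 + p.2^2 :=
      ((continuous_fst.pow 2).add (continuous_snd.pow 2))
    have c2 : Continuous fun p : ℝ × ℝ => (p.1 - d)^2 + p.2^2 :=
      (((continuous_fst.sub continuous_const).pow 2).add (continuous_snd.pow 2))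
    exact ((isClosed_le c1 continuous_const).measurableSet).inter
      ((isClosed_le c2 continuous_const).measurableSet)
  rw [hset, mpT.measure_preimage hAmeas.nullMeasurableSet]
  exact lens_area d r R hr hrR hd h1 h2
end
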